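/- Let (f, ≺) be a flow on an open graph (G, I, O). Define a collection of paths by declaring v_0 → v_1 → ... → v_n to be a path iff v_n ∈ O, v_0 ∉ range(f) and f(v_i) = v_{i+1} for all i. Then this collection is a path cover of (G, I, O): it covers all vertices, the paths are vertex-disjoint, each path meets I at most at its initial vertex, and each path meets O only at its final vertex. -/

import Mathlib

variable {V : Type*} [Fintype V] [DecidableEq V]

/-- The odd neighborhood of a vertex set `S`: vertices adjacent to an odd
number of vertices of `S`. -/
def oddNbhd (G : SimpleGraph V) [DecidableRel G.Adj] (S : Finset V) : Finset V :=
  Finset.univ.filter fun v => Odd ((S.filter fun u => G.Adj v u).card)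

/-- A (causal) flow on the open graph `(G, I, O)`. -/
structure IsFlow (G : SimpleGraph V) [DecidableRel G.Adj] (I O : Finset V)
    (f : V → V) (r : V → V → Prop) : Prop where
  strict : IsStrictOrder V r
  notInput : ∀ u, u ∉ O → f u ∉ I
  f1 : ∀ u, u ∉ O → r u (f u)
  f2 : ∀ u, u ∉ O → G.Adj u (f u)
  f3 : ∀ u, u ∉ O → ∀ v, G.Adj v (f u) → v = u ∨ r u v

/-- A maximal flow path: a nonempty list of vertices following the flow
function `f`, starting outside the range of `f`, ending in `O`, with no
intermediate vertex in `O`. -/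
def FlowPath (f : V → V) (O : Finset V) (l : List V) : Prop :=
  l ≠ [] ∧ l.Chain' (fun x y => f x = y) ∧
  (∃ o ∈ O, l.getLast? = some o) ∧ (∀ v ∈ l.dropLast, v ∉ O) ∧
  (∀ h ∈ l.head?, ∀ u, u ∉ O → f u ≠ h)

/-- Every element of the tail of a chain has a predecessor in the dropLast. -/
private lemma pred_of_mem_tail {R : V → V → Prop} :
    ∀ {l : List V}, l.Chain' R → ∀ v ∈ l.tail, ∃ u ∈ l.dropLast, R u v := by
  intro l
  induction l with
  | nil => intro _ v hv; simp at hv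
  | cons a t ih =>
    intro hc v hv
    simp only [List.tail_cons] at hv
    match t, hv with
    | b :: t', hv =>
      have hab : R a b := (List.isChain_cons_cons.1 hc).1
      have hct : (b :: t').Chain' R := (List.isChain_cons_cons.1 hc).2
      rcases List.mem_cons.1 hv with rfl | hv'
      · exact ⟨a, by simp [List.dropLast_cons₂], hab⟩
      · obtain ⟨u, hu, hr⟩ := ih hct v hv'
        exact ⟨u, by simp [List.dropLast_cons₂, List.mem_cons]; right; exact hu, hr⟩

/-- Forward determinism: two "suffix paths" with the same head are equal. -/
private lemma suff_det {f : V → V} {O : Finset V} :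
    ∀ (l : List V) (l' : List V), l.Chain' (fun x y => f x = y) →
      l'.Chain' (fun x y => f x = y) →
      (∃ o ∈ O, l.getLast? = some o) → (∃ o ∈ O, l'.getLast? = some o) →
      (∀ v ∈ l.dropLast, v ∉ O) → (∀ v ∈ l'.dropLast, v ∉ O) →
      l.head? = l'.head? → l = l' := by
  intro l
  induction l with
  | nil => intro l' _ _ hL _ _ _ _; simp at hL
  | cons a t ih =>
    intro l' hc hc' hL hL' hd hd' hh
    match l' with
    | [] => simp at hL'
    | a' :: t' =>
      simp only [List.head?_cons, Option.some_inj] at hh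
      subst hh
      match t, t' with
      | [], [] => rfl
      | [], b' :: t'' =>
        exfalso
        obtain ⟨o, ho, hlast⟩ := hL
        simp at hlast
        exact hd' a (by simp [List.dropLast_cons₂]) (hlast ▸ ho)
      | b :: t₀, [] =>
        exfalso
        obtain ⟨o, ho, hlast⟩ := hL'
        simp at hlast
        exact hd a (by simp [List.dropLast_cons₂]) (hlast ▸ ho)
      | b :: t₀, b' :: t₀' =>
        have hab : f a = b := (List.isChain_cons_cons.1 hc).1
        have hab' : f a = b' := (List.isChain_cons_cons.1 hc').1
        have hbb : b = b' := hab ▸ hab'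
        subst hbb
        have := ih (b :: t₀') (List.isChain_cons_cons.1 hc).2 (List.isChain_cons_cons.1 hc').2
          (by obtain ⟨o, ho, h⟩ := hL; exact ⟨o, ho, by simpa using h⟩)
          (by obtain ⟨o, ho, h⟩ := hL'; exact ⟨o, ho, by simpa using h⟩)
          (fun v hv => hd v (by simp [List.dropLast_cons₂, List.mem_cons]; right; exact hv))
          (fun v hv => hd' v (by simp [List.dropLast_cons₂, List.mem_cons]; right; exact hv))
          rfl
        rw [this]

theorem flow_paths_form_path_cover (G : SimpleGraph V) [DecidableRel G.Adj]
    (I O : Finset V) (f : V → V) (r : V → V → Prop) (hf : IsFlow G I O f r) :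
    (∀ v : V, ∃ l, FlowPath f O l ∧ v ∈ l) ∧
    (∀ l l', FlowPath f O l → FlowPath f O l' → (∃ v, v ∈ l ∧ v ∈ l') → l = l') ∧
    (∀ l, FlowPath f O l → l.Nodup) ∧
    (∀ l, FlowPath f O l → ∀ v ∈ l.tail, v ∉ I) := by
  classical
  haveI : IsIrrefl V r := ⟨fun a => hf.strict.irrefl a⟩
  haveI : IsTrans V r := hf.strict.toIsTrans
  have hasymm : ∀ a b, r a b → r b a → False := fun a b h h' =>
    irrefl a (_root_.trans h h')
  have wf : WellFounded r := Finite.wellFounded_of_trans_of_irrefl r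
  haveI : IsIrrefl V (flip r) := ⟨fun a h => irrefl (r := r) a h⟩
  haveI : IsTrans V (flip r) := ⟨fun a b c h h' => _root_.trans (r := r) h' h⟩
  have wff : WellFounded (flip r) := Finite.wellFounded_of_trans_of_irrefl (flip r)
  -- injectivity of f on the complement of O
  have finj : ∀ u u', u ∉ O → u' ∉ O → f u = f u' → u = u' := by
    intro u u' hu hu' h
    have a1 := hf.f3 u hu u' (h ▸ hf.f2 u' hu')
    have a2 := hf.f3 u' hu' u (h.symm ▸ hf.f2 u hu)
    rcases a1 with h1 | h1
    · exact h1.symm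
    rcases a2 with h2 | h2
    · exact h2
    exact absurd h2 (fun h2 => hasymm _ _ h1 h2)
  -- forward existence
  have fwd : ∀ v : V, ∃ l : List V, l ≠ [] ∧ l.head? = some v ∧
      l.Chain' (fun x y => f x = y) ∧ (∃ o ∈ O, l.getLast? = some o) ∧
      (∀ x ∈ l.dropLast, x ∉ O) := by
    intro v₀
    refine wff.induction (C := fun v => ∃ l : List V, l ≠ [] ∧ l.head? = some v ∧
      l.Chain' (fun x y => f x = y) ∧ (∃ o ∈ O, l.getLast? = some o) ∧
      (∀ x ∈ l.dropLast, x ∉ O)) v₀ ?_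
    intro v ih
    by_cases hv : v ∈ O
    · exact ⟨[v], by simp, by simp, List.isChain_singleton _, ⟨v, hv, by simp⟩, by simp⟩
    · obtain ⟨l, hne, hh, hc, hL, hd⟩ := ih (f v) (hf.f1 v hv)
      refine ⟨v :: l, by simp, by simp, ?_, ?_, ?_⟩
      · refine List.isChain_cons.2 ⟨?_, hc⟩
        intro y hy; rw [hh] at hy; exact Option.some_inj.1 hy
      · obtain ⟨o, ho, h⟩ := hL
        refine ⟨o, ho, ?_⟩
        cases l with
        | nil => exact absurd rfl hne
        | cons b t => simpa [List.getLast?_cons_cons] using h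
      · intro x hx
        cases l with
        | nil => exact absurd rfl hne
        | cons b t =>
          rw [List.dropLast_cons₂] at hx
          rcases List.mem_cons.1 hx with rfl | hx'
          · exact hv
          · exact hd x hx'
  -- backward existence
  have bwd : ∀ v : V, ∃ l : List V, l ≠ [] ∧ l.getLast? = some v ∧
      l.Chain' (fun x y => f x = y) ∧ (∀ x ∈ l.dropLast, x ∉ O) ∧
      (∀ h ∈ l.head?, ∀ u, u ∉ O → f u ≠ h) := by
    intro v₀
    refine wf.induction (C := fun v => ∃ l : List V, l ≠ [] ∧ l.getLast? = some v ∧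
      l.Chain' (fun x y => f x = y) ∧ (∀ x ∈ l.dropLast, x ∉ O) ∧
      (∀ h ∈ l.head?, ∀ u, u ∉ O → f u ≠ h)) v₀ ?_
    intro v ih
    by_cases hpre : ∃ u, u ∉ O ∧ f u = v
    · obtain ⟨u, hu, hfu⟩ := hpre
      obtain ⟨l, hne, hL, hc, hd, hh⟩ := ih u (hfu ▸ hf.f1 u hu)
      refine ⟨l ++ [v], by simp, by simp, ?_, ?_, ?_⟩
      · refine hc.append (by simp) ?_
        intro x hx y hy
        simp only [List.head?_cons, Option.mem_def, Option.some_inj] at hy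
        subst hy
        rw [hL] at hx
        rw [Option.mem_def, Option.some_inj] at hx
        subst hx; exact hfu
      · intro x hx
        rw [List.dropLast_concat] at hx
        have := List.dropLast_append_getLast? u hL
        rw [← this, List.mem_append] at hx
        rcases hx with hx | hx
        · exact hd x hx
        · simp at hx; exact hx ▸ hu
      · intro h hh' u' hu' hfu'
        rw [List.head?_append_of_ne_nil _ hne] at hh'
        exact hh h hh' u' hu' hfu'
    · refine ⟨[v], by simp, by simp, List.isChain_singleton _, by simp, ?_⟩
      intro h hh' u hu hfu
      simp at hh'
      exact hpre ⟨u, hu, hh' ▸ hfu⟩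
  -- predecessor lemma, within a flow path
  have pred : ∀ l : List V, FlowPath f O l → ∀ v ∈ l.tail,
      ∃ u ∈ l.dropLast, u ∉ O ∧ f u = v := by
    intro l hl v hv
    obtain ⟨u, hu, hr⟩ := pred_of_mem_tail hl.2.1 v hv
    exact ⟨u, hu, hl.2.2.2.1 u hu, hr⟩
  -- cover
  have cover : ∀ v : V, ∃ l, FlowPath f O l ∧ v ∈ l := by
    intro v
    obtain ⟨B, hBne, hBL, hBc, hBd, hBh⟩ := bwd v
    obtain ⟨F, hFne, hFh, hFc, hFL, hFd⟩ := fwd v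
    refine ⟨B ++ F.tail, ⟨by simp [hBne], ?_, ?_, ?_, ?_⟩, ?_⟩
    · refine hBc.append hFc.tail ?_
      intro x hx y hy
      rw [hBL, Option.mem_def, Option.some_inj] at hx
      subst hx
      cases F with
      | nil => exact absurd rfl hFne
      | cons a t =>
        simp only [List.head?_cons, Option.some_inj] at hFh
        subst hFh
        simp only [List.tail_cons] at hy
        exact List.isChain_cons.1 hFc |>.1 y hy
    · by_cases ht : F.tail = []
      · rw [ht, List.append_nil, hBL]
        cases F with
        | nil => exact absurd rfl hFne
        | cons a t =>
          simp only [List.tail_cons] at ht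
          subst ht
          obtain ⟨o, ho, hlast⟩ := hFL
          simp only [List.head?_cons, Option.some_inj] at hFh
          simp at hlast
          exact ⟨o, ho, by rw [← hFh, hlast]⟩
      · obtain ⟨o, ho, hlast⟩ := hFL
        refine ⟨o, ho, ?_⟩
        have htl : F.tail.getLast? = some o := by
          cases F with
          | nil => exact absurd rfl hFne
          | cons a t =>
            simp only [List.tail_cons] at ht ⊢
            cases t with
            | nil => exact absurd rfl ht
            | cons b t' => simpa [List.getLast?_cons_cons] using hlast
        rw [List.getLast?_append, htl]
        rfl
    · intro x hx
      by_cases ht : F.tail = []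
      · rw [ht, List.append_nil] at hx
        exact hBd x hx
      · rw [List.dropLast_append_of_ne_nil ht, List.mem_append] at hx
        rcases hx with hx | hx
        · -- x ∈ B : either in dropLast B or x = v; v ∉ O since F.tail ≠ []
          have hvO : v ∉ O := by
            cases F with
            | nil => exact absurd rfl hFne
            | cons a t =>
              simp only [List.head?_cons, Option.some_inj] at hFh
              simp only [List.tail_cons] at ht
              refine hFd v ?_
              cases t with
              | nil => exact absurd rfl ht
              | cons b t' =>
                rw [List.dropLast_cons₂]
                exact List.mem_cons.2 (Or.inl hFh.symm)
          have := List.dropLast_append_getLast? v hBL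
          rw [← this, List.mem_append] at hx
          rcases hx with hx | hx
          · exact hBd x hx
          · simp at hx; exact hx ▸ hvO
        · -- x ∈ dropLast F.tail ⊆ dropLast F
          refine hFd x ?_
          cases F with
          | nil => exact absurd rfl hFne
          | cons a t =>
            simp only [List.tail_cons] at hx ht
            cases t with
            | nil => exact absurd rfl ht
            | cons b t' =>
              rw [List.dropLast_cons₂]
              exact List.mem_cons.2 (Or.inr hx)
    · intro h hh u hu hfu
      rw [List.head?_append_of_ne_nil _ hBne] at hh
      exact hBh h hh u hu hfu
    · refine List.mem_append.2 (Or.inl ?_)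
      have := List.dropLast_append_getLast? v hBL
      rw [← this]
      simp
  -- uniqueness
  have uniq : ∀ v (l l' : List V), FlowPath f O l → FlowPath f O l' →
      v ∈ l → v ∈ l' → l = l' := by
    intro v₀
    refine wf.induction (C := fun v => ∀ (l l' : List V), FlowPath f O l → FlowPath f O l' →
      v ∈ l → v ∈ l' → l = l') v₀ ?_
    intro v ih l l' hl hl' hv hv'
    have hsplit : ∀ (m : List V), v ∈ m → m.head? = some v ∨ v ∈ m.tail := by
      intro m hm
      cases m with
      | nil => simp at hm
      | cons a t =>
        rcases List.mem_cons.1 hm with rfl | h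
        · exact Or.inl rfl
        · exact Or.inr h
    rcases hsplit l hv with hhead | htail
    · rcases hsplit l' hv' with hhead' | htail'
      · exact suff_det l l' hl.2.1 hl'.2.1 hl.2.2.1 hl'.2.2.1 hl.2.2.2.1 hl'.2.2.2.1
          (hhead.trans hhead'.symm)
      · obtain ⟨u, _, huO, hfu⟩ := pred l' hl' v htail'
        exact absurd hfu (hl.2.2.2.2 v hhead u huO)
    · rcases hsplit l' hv' with hhead' | htail'
      · obtain ⟨u, _, huO, hfu⟩ := pred l hl v htail
        exact absurd hfu (hl'.2.2.2.2 v hhead' u huO)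
      · obtain ⟨u, hum, huO, hfu⟩ := pred l hl v htail
        obtain ⟨u', hum', huO', hfu'⟩ := pred l' hl' v htail'
        have : u = u' := finj u u' huO huO' (hfu.trans hfu'.symm)
        subst this
        exact ih u (hfu ▸ hf.f1 u huO) l l' hl hl'
          (List.mem_of_mem_dropLast hum) (List.mem_of_mem_dropLast hum')
  -- nodup
  have chainr : ∀ l : List V, l.Chain' (fun x y => f x = y) →
      (∀ x ∈ l.dropLast, x ∉ O) → l.Chain' r := by
    intro l
    induction l with
    | nil => intro _ _; exact List.isChain_nil
    | cons a t ih =>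
      intro hc hd
      cases t with
      | nil => exact List.isChain_singleton _
      | cons b t' =>
        refine List.isChain_cons_cons.2 ⟨?_, ?_⟩
        · have hab : f a = b := (List.isChain_cons_cons.1 hc).1
          have haO : a ∉ O := hd a (by simp [List.dropLast_cons₂])
          exact hab ▸ hf.f1 a haO
        · exact ih (List.isChain_cons_cons.1 hc).2
            (fun x hx => hd x (by rw [List.dropLast_cons₂]; exact List.mem_cons.2 (Or.inr hx)))
  have nodup : ∀ l, FlowPath f O l → l.Nodup := by
    intro l hl
    have hcr : l.Chain' r := chainr l hl.2.1 hl.2.2.2.1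
    have hp : l.Pairwise r := List.isChain_iff_pairwise.1 hcr
    exact hp.imp (fun h => by rintro rfl; exact irrefl _ h)
  refine ⟨cover, fun l l' hl hl' ⟨v, hv, hv'⟩ => uniq v l l' hl hl' hv hv', nodup, ?_⟩
  intro l hl v hv
  obtain ⟨u, _, huO, hfu⟩ := pred l hl v hv
  exact hfu ▸ hf.notInput u huO
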